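/- Let F be a field and x_1, …, x_n nonzero pairwise distinct elements of F. Let S be the s×s submatrix of the Vandermonde-type matrix V(x_1,…,x_n) obtained by choosing s consecutive rows i_1, i_1+1, …, i_1+s−1 (all indices at most n−1) and any s distinct columns k_1, …, k_s. Then det S ≠ 0. -/

import Mathlib

/-- Let `F` be a field and `x_1, …, x_n` nonzero pairwise distinct
elements of `F`.  Let `S` be the `s × s` submatrix of the Vandermonde-type matrix
`V(x_1,…,x_n)` obtained by choosing `s` consecutive rows `i1, i1+1, …, i1+s-1`
(all indices at most `n-1`) and any `s` distinct columns `k_1, …, k_s`.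
Then `det S ≠ 0`. -/
theorem vandermonde_consecutive_submatrix_det_ne_zero {F : Type*} [Field F]
    (n s i1 : ℕ) (hrow : i1 + (s - 1) ≤ n - 1)
    (x : Fin n → F) (hx0 : ∀ j, x j ≠ 0) (hxinj : Function.Injective x)
    (cols : Fin s → Fin n) (hcols : Function.Injective cols) :
    (Matrix.of fun l m : Fin s => x (cols m) ^ (i1 + (l : ℕ))).det ≠ 0 := by
  set y : Fin s → F := fun m => x (cols m) with hy
  have hmat : (Matrix.of fun l m : Fin s => x (cols m) ^ (i1 + (l : ℕ)))
      = (Matrix.vandermonde y).transpose * Matrix.diagonal (fun m => y m ^ i1) := by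
    ext l m
    simp [Matrix.mul_diagonal, Matrix.vandermonde, pow_add, mul_comm]
    rfl
  rw [hmat, Matrix.det_mul, Matrix.det_transpose, Matrix.det_diagonal,
    Matrix.det_vandermonde]
  refine mul_ne_zero (Finset.prod_ne_zero_iff.mpr ?_) (Finset.prod_ne_zero_iff.mpr ?_)
  · intro i _
    refine Finset.prod_ne_zero_iff.mpr fun j hj => sub_ne_zero.mpr fun h => ?_
    exact (Finset.mem_Ioi.mp hj).ne' (hcols (hxinj h))
  · exact fun m _ => pow_ne_zero _ (hx0 _)
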